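/- The entropy (in bits) of a multinomial distribution with n = K_a trials over M = 2^J uniform categories equals J·K_a − log₂(K_a!) + 2^J · Σ_{t=0}^{K_a} C(K_a, t) (2^{-J})^t (1 − 2^{-J})^{K_a − t} log₂(t!). -/

import Mathlib

open Finset Real

section aux
variable {ι : Type*} [Fintype ι] [DecidableEq ι]

variable {ι : Type*} [Fintype ι] [DecidableEq ι]

lemma total_multinomial_sum (n : ℕ) :
    ∑ z ∈ Finset.piAntidiag (univ : Finset ι) n, Nat.multinomial univ z
      = Fintype.card ι ^ n := by
  have h := Finset.sum_pow_eq_sum_piAntidiag (univ : Finset ι) (fun _ => (1 : ℕ)) n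
  simpa [Finset.card_univ] using h.symm

lemma fiber_multinomial_sum (i0 : ι) (n t : ℕ) :
    ∑ z ∈ (Finset.piAntidiag (univ : Finset ι) n).filter (fun z => z i0 = t),
      Nat.multinomial univ z = n.choose t * (Fintype.card ι - 1) ^ (n - t) := by
  classical
  have key := Finset.sum_pow_eq_sum_piAntidiag (univ : Finset ι)
      (fun i => if i = i0 then (Polynomial.X : Polynomial ℕ) else 1) n
  have h1 : (∑ i : ι, (if i = i0 then (Polynomial.X : Polynomial ℕ) else 1))
      = Polynomial.X + Polynomial.C ((Fintype.card ι - 1 : ℕ)) := by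
    rw [Finset.sum_ite, Finset.filter_eq', Finset.filter_ne']
    simp [Finset.card_erase_of_mem, Polynomial.C_eq_natCast, Finset.card_univ]
  have h2 : ∀ z : ι → ℕ, (∏ i : ι, (if i = i0 then (Polynomial.X : Polynomial ℕ) else 1) ^ z i)
      = Polynomial.X ^ z i0 := by
    intro z
    refine Finset.prod_eq_single i0 (fun b _ hb => by simp [hb]) (fun h => absurd (mem_univ i0) h) |>.trans ?_
    simp
  rw [h1] at key
  simp_rw [h2] at key
  have hc := congrArg (fun p => Polynomial.coeff p t) key
  simp only [Polynomial.coeff_X_add_C_pow] at hc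
  rw [Polynomial.finset_sum_coeff] at hc
  simp only [← Polynomial.C_eq_natCast, Polynomial.coeff_C_mul, Polynomial.coeff_X_pow,
    mul_ite, mul_one, mul_zero] at hc
  simp only [Nat.cast_id] at hc
  have heq : (∑ a ∈ Finset.piAntidiag (univ : Finset ι) n, if a i0 = t then Nat.multinomial univ a else 0)
      = ∑ x ∈ Finset.piAntidiag (univ : Finset ι) n, if t = x i0 then Nat.multinomial univ x else 0 := by
    apply Finset.sum_congr rfl; intro z _; simp [eq_comm]
  rw [Finset.sum_filter, heq, ← hc, mul_comm]


lemma fiber_real (i0 : ι) (n : ℕ) (g : ℕ → ℝ) :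
    ∑ z ∈ Finset.piAntidiag (univ : Finset ι) n, (Nat.multinomial univ z : ℝ) * g (z i0)
      = ∑ t ∈ Finset.range (n+1),
          ((n.choose t : ℝ) * ((Fintype.card ι - 1 : ℕ) : ℝ) ^ (n - t)) * g t := by
  classical
  have hmaps : ∀ z ∈ Finset.piAntidiag (univ : Finset ι) n, z i0 ∈ Finset.range (n+1) := by
    intro z hz
    rw [Finset.mem_piAntidiag] at hz
    rw [Finset.mem_range, Nat.lt_succ_iff, ← hz.1]
    exact Finset.single_le_sum (fun i _ => Nat.zero_le _) (Finset.mem_univ i0)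
  rw [← Finset.sum_fiberwise_of_maps_to hmaps (fun z => (Nat.multinomial univ z : ℝ) * g (z i0))]
  apply Finset.sum_congr rfl
  intro t ht
  have hcg : ∀ z ∈ (Finset.piAntidiag (univ : Finset ι) n).filter (fun z => z i0 = t),
      (Nat.multinomial univ z : ℝ) * g (z i0) = (Nat.multinomial univ z : ℝ) * g t := by
    intro z hz; rw [(Finset.mem_filter.mp hz).2]
  rw [Finset.sum_congr rfl hcg, ← Finset.sum_mul]
  congr 1
  rw [← Nat.cast_sum, fiber_multinomial_sum]
  push_cast
  ring


lemma logb_prod' {α : Type*} (s : Finset α) (f : α → ℝ) (hf : ∀ i ∈ s, f i ≠ 0) :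
    Real.logb 2 (∏ i ∈ s, f i) = ∑ i ∈ s, Real.logb 2 (f i) := by
  simp [Real.logb, Real.log_prod hf, Finset.sum_div]

end aux

/-- Entropy (in bits) of the multinomial distribution with `K_a` trials over
`2^J` uniform categories. -/
theorem stmt_4 (Ka J : ℕ) (hKa : 0 < Ka) (hJ : 0 < J) :
    -∑ z ∈ (Fintype.piFinset fun _ : Fin (2 ^ J) => Finset.range (Ka + 1)).filter
        (fun z => (∑ i, z i) = Ka),
      ((2 : ℝ) ^ (-(Ka * J : ℝ)) * (Nat.factorial Ka : ℝ) / ∏ i, (Nat.factorial (z i) : ℝ))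
        * Real.logb 2
          ((2 : ℝ) ^ (-(Ka * J : ℝ)) * (Nat.factorial Ka : ℝ) / ∏ i, (Nat.factorial (z i) : ℝ))
    = (J : ℝ) * Ka - Real.logb 2 (Nat.factorial Ka : ℝ)
      + 2 ^ J * ∑ t ∈ Finset.range (Ka + 1),
          (Ka.choose t : ℝ) * ((2 : ℝ) ^ (-(J : ℝ))) ^ t
            * (1 - (2 : ℝ) ^ (-(J : ℝ))) ^ (Ka - t)
            * Real.logb 2 (Nat.factorial t : ℝ) := by
  classical
  set M : ℕ := 2 ^ J with hMdef
  have hM1 : 1 ≤ M := Nat.one_le_two_pow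
  have hMR1 : (1:ℝ) ≤ (M:ℝ) := by exact_mod_cast hM1
  have hMpos : (0:ℝ) < (M:ℝ) := lt_of_lt_of_le one_pos hMR1
  have hMcast : ((M:ℕ):ℝ) = (2:ℝ) ^ J := by rw [hMdef]; push_cast; ring
  -- the index set
  have hset : (Fintype.piFinset fun _ : Fin M => Finset.range (Ka + 1)).filter
      (fun z => (∑ i, z i) = Ka) = Finset.piAntidiag (univ : Finset (Fin M)) Ka := by
    ext z
    simp only [Finset.mem_filter, Fintype.mem_piFinset, Finset.mem_range, Nat.lt_succ_iff,
      Finset.mem_piAntidiag, Finset.mem_univ, implies_true, and_true, ne_eq]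
    constructor
    · exact fun h => h.2
    · exact fun h => ⟨fun i => h ▸ Finset.single_le_sum (fun i _ => Nat.zero_le _)
        (Finset.mem_univ i), h⟩
  -- key rpow identities
  have hA : (2:ℝ) ^ (-((Ka:ℝ) * (J:ℝ))) = ((M:ℝ) ^ Ka)⁻¹ := by
    rw [Real.rpow_neg (by norm_num : (0:ℝ) ≤ 2)]
    congr 1
    rw [show ((Ka:ℝ) * (J:ℝ)) = ((Ka * J : ℕ) : ℝ) by push_cast; ring, Real.rpow_natCast,
      mul_comm Ka J, pow_mul, ← hMcast]
  have hB : (2:ℝ) ^ (-(J:ℝ)) = (M:ℝ)⁻¹ := by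
    rw [Real.rpow_neg (by norm_num : (0:ℝ) ≤ 2)]
    congr 1
    rw [Real.rpow_natCast, ← hMcast]
  have hLKa : 0 < (Ka.factorial : ℝ) := by exact_mod_cast Ka.factorial_pos
  -- rewrite each summand
  have hexp : ∀ z ∈ Finset.piAntidiag (univ : Finset (Fin M)) Ka,
      ((2 : ℝ) ^ (-(Ka * J : ℝ)) * (Nat.factorial Ka : ℝ) / ∏ i, (Nat.factorial (z i) : ℝ))
        * Real.logb 2
          ((2 : ℝ) ^ (-(Ka * J : ℝ)) * (Nat.factorial Ka : ℝ) / ∏ i, (Nat.factorial (z i) : ℝ))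
      = (Nat.multinomial univ z : ℝ) / (M:ℝ)^Ka *
          ((Real.logb 2 (Nat.factorial Ka : ℝ) - (Ka:ℝ) * (J:ℝ))
            - ∑ i, Real.logb 2 (Nat.factorial (z i) : ℝ)) := by
    intro z hz
    rw [Finset.mem_piAntidiag] at hz
    have hprodpos : 0 < ∏ i, (Nat.factorial (z i) : ℝ) :=
      Finset.prod_pos fun i _ => by exact_mod_cast (z i).factorial_pos
    have hfac : (∏ i, (Nat.factorial (z i) : ℝ)) * (Nat.multinomial univ z : ℝ)
        = (Nat.factorial Ka : ℝ) := by
      rw [← Nat.cast_prod, ← Nat.cast_mul, Nat.multinomial_spec, hz.1]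
    have hp : (2 : ℝ) ^ (-(Ka * J : ℝ)) * (Nat.factorial Ka : ℝ) / ∏ i, (Nat.factorial (z i) : ℝ)
        = (Nat.multinomial univ z : ℝ) / (M:ℝ)^Ka := by
      rw [hA, ← hfac]
      field_simp
    have h2pos : (0:ℝ) < 2 := by norm_num
    have h2ne : (2:ℝ) ≠ 1 := by norm_num
    have hlog : Real.logb 2
          ((2 : ℝ) ^ (-(Ka * J : ℝ)) * (Nat.factorial Ka : ℝ) / ∏ i, (Nat.factorial (z i) : ℝ))
        = (Real.logb 2 (Nat.factorial Ka : ℝ) - (Ka:ℝ) * (J:ℝ))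
            - ∑ i, Real.logb 2 (Nat.factorial (z i) : ℝ) := by
      rw [Real.logb_div (by positivity) hprodpos.ne',
        Real.logb_mul (by positivity) hLKa.ne',
        Real.logb_rpow h2pos h2ne,
        logb_prod' _ _ (fun i _ => by exact_mod_cast (z i).factorial_pos.ne')]
      push_cast
      ring
    rw [hlog, hp]
  rw [hset, Finset.sum_congr rfl hexp]
  set L := Real.logb 2 (Nat.factorial Ka : ℝ) with hL
  set S := Finset.piAntidiag (univ : Finset (Fin M)) Ka with hS
  have hTot : ∑ z ∈ S, (Nat.multinomial univ z : ℝ) = (M:ℝ)^Ka := by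
    rw [← Nat.cast_sum, total_multinomial_sum]
    push_cast [Fintype.card_fin]
    ring
  have hFib : ∀ i : Fin M, ∑ z ∈ S, (Nat.multinomial univ z : ℝ)
        * Real.logb 2 (Nat.factorial (z i) : ℝ)
      = ∑ t ∈ Finset.range (Ka+1),
          ((Ka.choose t : ℝ) * ((M - 1 : ℕ) : ℝ) ^ (Ka - t)) * Real.logb 2 (Nat.factorial t : ℝ) := by
    intro i
    simpa [Fintype.card_fin] using fiber_real i Ka (fun t => Real.logb 2 (Nat.factorial t : ℝ))
  have h1 : ∑ z ∈ S, (Nat.multinomial univ z : ℝ)/(M:ℝ)^Ka * (L - (Ka:ℝ) * (J:ℝ))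
      = L - (Ka:ℝ) * (J:ℝ) := by
    rw [← Finset.sum_mul, ← Finset.sum_div, hTot]
    field_simp
  have h2 : ∑ z ∈ S, ∑ i : Fin M,
        (Nat.multinomial univ z : ℝ)/(M:ℝ)^Ka * Real.logb 2 (Nat.factorial (z i) : ℝ)
      = (M:ℝ) * ∑ t ∈ Finset.range (Ka+1),
          ((Ka.choose t : ℝ) * ((M - 1 : ℕ) : ℝ) ^ (Ka - t) / (M:ℝ)^Ka)
            * Real.logb 2 (Nat.factorial t : ℝ) := by
    rw [Finset.sum_comm]
    have hstep : ∀ i : Fin M, ∑ z ∈ S,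
          (Nat.multinomial univ z : ℝ)/(M:ℝ)^Ka * Real.logb 2 (Nat.factorial (z i) : ℝ)
        = ∑ t ∈ Finset.range (Ka+1),
            ((Ka.choose t : ℝ) * ((M - 1 : ℕ) : ℝ) ^ (Ka - t) / (M:ℝ)^Ka)
              * Real.logb 2 (Nat.factorial t : ℝ) := by
      intro i
      simp_rw [div_mul_eq_mul_div, ← Finset.sum_div]
      rw [hFib i]
    rw [Finset.sum_congr rfl (fun i _ => hstep i), Finset.sum_const, Finset.card_univ,
      Fintype.card_fin, nsmul_eq_mul]
  have hsplit : ∀ z ∈ S, (Nat.multinomial univ z : ℝ)/(M:ℝ)^Ka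
        * (L - (Ka:ℝ) * (J:ℝ) - ∑ i : Fin M, Real.logb 2 (Nat.factorial (z i) : ℝ))
      = (Nat.multinomial univ z : ℝ)/(M:ℝ)^Ka * (L - (Ka:ℝ) * (J:ℝ))
        - ∑ i : Fin M, (Nat.multinomial univ z : ℝ)/(M:ℝ)^Ka
            * Real.logb 2 (Nat.factorial (z i) : ℝ) := by
    intro z _
    rw [mul_sub, Finset.mul_sum]
  rw [Finset.sum_congr rfl hsplit, Finset.sum_sub_distrib, h1, h2]
  have hterm : ∀ t ∈ Finset.range (Ka+1),
      ((Ka.choose t : ℝ) * ((M - 1 : ℕ) : ℝ) ^ (Ka - t) / (M:ℝ)^Ka)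
          * Real.logb 2 (Nat.factorial t : ℝ)
      = (Ka.choose t : ℝ) * ((2 : ℝ) ^ (-(J : ℝ))) ^ t
          * (1 - (2 : ℝ) ^ (-(J : ℝ))) ^ (Ka - t) * Real.logb 2 (Nat.factorial t : ℝ) := by
    intro t ht
    rw [Finset.mem_range, Nat.lt_succ_iff] at ht
    rw [hB]
    have hsub : ((M - 1 : ℕ) : ℝ) = (M:ℝ) - 1 := by
      push_cast [hM1]; ring
    have h1M : 1 - (M:ℝ)⁻¹ = ((M:ℝ) - 1)/(M:ℝ) := by field_simp
    have hpowsplit : (M:ℝ)^Ka = (M:ℝ)^t * (M:ℝ)^(Ka-t) := by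
      rw [← pow_add, Nat.add_sub_cancel' ht]
    rw [hsub, h1M, hpowsplit, div_pow, inv_pow]
    have hMt : (M:ℝ)^t ≠ 0 := by positivity
    have hMkt : (M:ℝ)^(Ka-t) ≠ 0 := by positivity
    field_simp
  rw [Finset.sum_congr rfl hterm, ← hMcast]
  ring
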